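/- Let n ≥ 1 and let a be an n×n complex Hermitian matrix. Then a is positive semidefinite if and only if Re(trace(ab)) ≥ 0 for every positive semidefinite n×n complex matrix b. That is, the cone of positive semidefinite Hermitian matrices is self-dual with respect to the trace inner product on Hermitian matrices. -/

import Mathlib

open Matrix
open scoped ComplexOrder

/-- A Hermitian matrix `a` is positive semidefinite iff
`Re(tr(ab)) ≥ 0` for every positive semidefinite `b`: the positive semidefinite cone is
self-dual with respect to the trace inner product on Hermitian matrices. -/
theorem statement12 (n : ℕ) (hn : 1 ≤ n) (a : Matrix (Fin n) (Fin n) ℂ)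
    (ha : aᴴ = a) :
    a.PosSemidef ↔
      ∀ b : Matrix (Fin n) (Fin n) ℂ, b.PosSemidef → 0 ≤ ((a * b).trace).re := by
  constructor
  · intro hA b hb
    open scoped MatrixOrder in
    obtain ⟨B, hB⟩ := CStarAlgebra.nonneg_iff_eq_star_mul_self.mp hb.nonneg
    rw [star_eq_conjTranspose] at hB
    subst hB
    have h1 : (a * (Bᴴ * B)).trace = (B * a * Bᴴ).trace := by
      rw [← Matrix.mul_assoc, Matrix.trace_mul_comm, ← Matrix.mul_assoc]
    rw [h1]
    have hpsd := hA.mul_mul_conjTranspose_same B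
    have hdiag : ∀ i, 0 ≤ ((B * a * Bᴴ) i i).re := by
      intro i
      have hz := hpsd.dotProduct_mulVec_nonneg (Pi.single i 1)
      have he : dotProduct (star (Pi.single i 1)) ((B * a * Bᴴ) *ᵥ Pi.single i 1)
          = (B * a * Bᴴ) i i := by
        simp [dotProduct, mulVec, Pi.single_apply, Finset.sum_ite_eq']
      rw [he] at hz
      exact (Complex.le_def.mp hz).1
    rw [Matrix.trace, Complex.re_sum]
    exact Finset.sum_nonneg fun i _ => hdiag i
  · intro h
    refine posSemidef_iff_dotProduct_mulVec.mpr ⟨ha, fun x => ?_⟩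
    have hb := posSemidef_conjTranspose_mul_self (Matrix.replicateRow Unit (star x))
    have hx := h _ hb
    have htr : (a * ((Matrix.replicateRow Unit (star x))ᴴ * Matrix.replicateRow Unit (star x))).trace
        = dotProduct (star x) (a *ᵥ x) := by
      simp only [Matrix.trace, Matrix.diag, Matrix.mul_apply, Matrix.conjTranspose_apply,
        Matrix.replicateRow_apply, dotProduct, mulVec, Pi.star_apply, star_star,
        Finset.univ_unique, Finset.sum_singleton, Finset.mul_sum]
      exact Finset.sum_congr rfl fun i _ => Finset.sum_congr rfl fun j _ => by ring
    rw [htr] at hx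
    have him : (dotProduct (star x) (a *ᵥ x)).im = 0 := by
      have hsq : star (dotProduct (star x) (a *ᵥ x)) = dotProduct (star x) (a *ᵥ x) := by
        conv_lhs => rw [← ha]
        simp only [dotProduct, mulVec, star_sum, star_mul', Matrix.conjTranspose_apply,
          Pi.star_apply, star_star, Finset.mul_sum]
        rw [Finset.sum_comm]
        exact Finset.sum_congr rfl fun i _ => Finset.sum_congr rfl fun j _ => by ring
      have h2 := congrArg Complex.im hsq
      simp only [Complex.star_def, Complex.conj_im] at h2
      linarith
    rw [Complex.le_def]
    simp [hx, him]
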